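/- Let A be an n×n complex positive definite matrix and let B1, B2 be n×n complex positive semidefinite matrices with B1 ≤ B2 in the Loewner order. Then A#B1 ≤ A#B2 in the Loewner order (monotonicity of the matrix geometric mean in its second argument). -/

import Mathlib

open Matrix
open scoped ComplexOrder
open scoped Classical

/-- The positive semidefinite square root of a positive semidefinite matrix
(junk value `0` if the matrix is not positive semidefinite). -/
noncomputable def psdSqrt {n : ℕ} (X : Matrix (Fin n) (Fin n) ℂ) : Matrix (Fin n) (Fin n) ℂ :=
  if h : X.PosSemidef then
    h.1.eigenvectorUnitary.1 * diagonal ((↑) ∘ (√·) ∘ h.1.eigenvalues) *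
      (star h.1.eigenvectorUnitary : Matrix (Fin n) (Fin n) ℂ)
  else 0

/-- The matrix geometric mean `A # B = A^{1/2} (A^{-1/2} B A^{-1/2})^{1/2} A^{1/2}`,
where `A^{-1/2} = (A^{1/2})⁻¹`. -/
noncomputable def geomMean {n : ℕ} (A B : Matrix (Fin n) (Fin n) ℂ) :
    Matrix (Fin n) (Fin n) ℂ :=
  psdSqrt A * psdSqrt ((psdSqrt A)⁻¹ * B * (psdSqrt A)⁻¹) * psdSqrt A

/-- The positive semidefinite square root (port helper). -/
noncomputable def Matrix.PosSemidef.sqrt {n : ℕ} {X : Matrix (Fin n) (Fin n) ℂ}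
    (h : X.PosSemidef) : Matrix (Fin n) (Fin n) ℂ :=
  h.1.eigenvectorUnitary.1 * diagonal ((↑) ∘ (√·) ∘ h.1.eigenvalues) *
    (star h.1.eigenvectorUnitary : Matrix (Fin n) (Fin n) ℂ)

lemma Matrix.PosSemidef.posSemidef_sqrt {n : ℕ} {X : Matrix (Fin n) (Fin n) ℂ}
    (h : X.PosSemidef) : h.sqrt.PosSemidef := by
  have hd : (diagonal (((↑) ∘ (√·) ∘ h.1.eigenvalues) : Fin n → ℂ)).PosSemidef :=
    posSemidef_diagonal_iff.mpr fun i => Complex.zero_le_real.mpr (Real.sqrt_nonneg _)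
  have := hd.mul_mul_conjTranspose_same (h.1.eigenvectorUnitary : Matrix (Fin n) (Fin n) ℂ)
  rwa [← star_eq_conjTranspose] at this

lemma Matrix.PosSemidef.sq_sqrt {n : ℕ} {X : Matrix (Fin n) (Fin n) ℂ}
    (h : X.PosSemidef) : h.sqrt ^ 2 = X := by
  have hU : (star h.1.eigenvectorUnitary : Matrix (Fin n) (Fin n) ℂ) *
      (h.1.eigenvectorUnitary : Matrix (Fin n) (Fin n) ℂ) = 1 := Unitary.coe_star_mul_self _
  have hD : diagonal (((↑) ∘ (√·) ∘ h.1.eigenvalues) : Fin n → ℂ) *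
      diagonal (((↑) ∘ (√·) ∘ h.1.eigenvalues) : Fin n → ℂ) =
      diagonal (RCLike.ofReal ∘ h.1.eigenvalues) := by
    rw [diagonal_mul_diagonal]
    congr 1
    funext i
    simp only [Function.comp_apply]
    rw [← Complex.ofReal_mul, Real.mul_self_sqrt (h.eigenvalues_nonneg i)]
    rfl
  conv_rhs => rw [h.1.spectral_theorem, Unitary.conjStarAlgAut_apply]
  rw [sqrt, pow_two]
  calc _ = (h.1.eigenvectorUnitary : Matrix (Fin n) (Fin n) ℂ) *
        (diagonal (((↑) ∘ (√·) ∘ h.1.eigenvalues) : Fin n → ℂ) *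
        ((star h.1.eigenvectorUnitary : Matrix (Fin n) (Fin n) ℂ) *
      (h.1.eigenvectorUnitary : Matrix (Fin n) (Fin n) ℂ)) *
        diagonal (((↑) ∘ (√·) ∘ h.1.eigenvalues) : Fin n → ℂ)) *
        (star h.1.eigenvectorUnitary : Matrix (Fin n) (Fin n) ℂ) := by
        simp only [Matrix.mul_assoc]
    _ = _ := by rw [hU, Matrix.mul_one, hD]

lemma Matrix.IsHermitian.posSemidef_of_eigenvalues_nonneg {n : ℕ}
    {X : Matrix (Fin n) (Fin n) ℂ} (hX : X.IsHermitian) (h : ∀ i, 0 ≤ hX.eigenvalues i) :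
    X.PosSemidef :=
  hX.posSemidef_iff_eigenvalues_nonneg.mpr fun i => h i

/-- Operator monotonicity of the positive semidefinite square root. -/
lemma sqrt_loewner_mono {n : ℕ} {X Y : Matrix (Fin n) (Fin n) ℂ}
    (hX : X.PosSemidef) (hY : Y.PosSemidef) (h : (Y - X).PosSemidef) :
    (hY.sqrt - hX.sqrt).PosSemidef := by
  set S := hX.sqrt with hSdef
  set T := hY.sqrt with hTdef
  have hS := hX.posSemidef_sqrt
  have hT := hY.posSemidef_sqrt
  have hD : (T - S).IsHermitian := hT.1.sub hS.1
  refine hD.posSemidef_of_eigenvalues_nonneg fun i => ?_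
  set t : ℝ := hD.eigenvalues i with ht
  set v : Fin n → ℂ := ⇑(hD.eigenvectorBasis i) with hvdef
  have hv' : (T - S) *ᵥ v = t • v := hD.mulVec_eigenvectorBasis i
  have hvne : v ≠ 0 := by
    intro h0
    have := hD.eigenvectorBasis.orthonormal.1 i
    rw [hvdef] at h0
    have : ‖hD.eigenvectorBasis i‖ = 1 := hD.eigenvectorBasis.orthonormal.1 i
    rw [show hD.eigenvectorBasis i = 0 from by ext j; exact congrFun h0 j] at this
    simp at this
  have key : star v ⬝ᵥ (T ^ 2 - S ^ 2) *ᵥ v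
      = t * (star v ⬝ᵥ T *ᵥ v + star v ⬝ᵥ S *ᵥ v) := calc
    star v ⬝ᵥ (T ^ 2 - S ^ 2) *ᵥ v
        = star v ⬝ᵥ T *ᵥ (T - S) *ᵥ v + star v ⬝ᵥ (T - S) *ᵥ S *ᵥ v := by
      rw [mulVec_mulVec, mulVec_mulVec, ← dotProduct_add, ← add_mulVec, mul_sub, sub_mul,
        add_sub, sub_add_cancel, pow_two, pow_two]
    _ = t * (star v ⬝ᵥ T *ᵥ v) + (star v) ᵥ* (T - S)ᴴ ⬝ᵥ S *ᵥ v := by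
      rw [hv', mulVec_smul, dotProduct_smul, RCLike.real_smul_eq_coe_mul,
        dotProduct_mulVec _ (T - S), hD]
      rfl
    _ = t * (star v ⬝ᵥ T *ᵥ v + star v ⬝ᵥ S *ᵥ v) := by
      rw [← star_mulVec, hv', star_smul, smul_dotProduct, mul_add,
        RCLike.real_smul_eq_coe_mul]
      norm_num
  have hsq : T ^ 2 - S ^ 2 = Y - X := by rw [hY.sq_sqrt, hX.sq_sqrt]
  have hTv : (0 : ℂ) ≤ star v ⬝ᵥ T *ᵥ v := hT.dotProduct_mulVec_nonneg v
  have hSv : (0 : ℂ) ≤ star v ⬝ᵥ S *ᵥ v := hS.dotProduct_mulVec_nonneg v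
  have hpos : (0 : ℂ) ≤ (t : ℂ) * (star v ⬝ᵥ T *ᵥ v + star v ⬝ᵥ S *ᵥ v) := by
    rw [← key, hsq]; exact h.dotProduct_mulVec_nonneg v
  set c : ℂ := star v ⬝ᵥ T *ᵥ v + star v ⬝ᵥ S *ᵥ v with hc
  have hcnn : (0 : ℂ) ≤ c := add_nonneg hTv hSv
  by_contra htneg
  push_neg at htneg
  -- from t < 0 and 0 ≤ t * c with 0 ≤ c, get c = 0
  have hc0 : c = 0 := by
    rcases Complex.nonneg_iff.mp hcnn with ⟨hcre, hcim⟩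
    rcases Complex.nonneg_iff.mp hpos with ⟨hpre, _⟩
    have hre0 : c.re = 0 := by
      have : ((t : ℂ) * c).re = t * c.re := by
        simp [Complex.mul_re, ← hcim]
      rw [this] at hpre
      nlinarith
    exact Complex.ext hre0 hcim.symm
  have hT0 : star v ⬝ᵥ T *ᵥ v = 0 := by
    have := add_eq_zero_iff_of_nonneg hTv hSv |>.mp hc0
    exact this.1
  have hS0 : star v ⬝ᵥ S *ᵥ v = 0 := by
    have := add_eq_zero_iff_of_nonneg hTv hSv |>.mp hc0
    exact this.2
  have hTv0 : T *ᵥ v = 0 := (hT.dotProduct_mulVec_zero_iff v).mp hT0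
  have hSv0 : S *ᵥ v = 0 := (hS.dotProduct_mulVec_zero_iff v).mp hS0
  have : t • v = 0 := by rw [← hv', sub_mulVec, hTv0, hSv0, sub_zero]
  rcases smul_eq_zero.mp this with h1 | h2
  · exact absurd h1 (ne_of_lt htneg)
  · exact hvne h2

/-- Monotonicity of the matrix geometric mean in its second argument:
if B1 ≤ B2 in the Loewner order then A#B1 ≤ A#B2. -/
theorem geomMean_mono_right {n : ℕ}
    {A B1 B2 : Matrix (Fin n) (Fin n) ℂ} (hA : A.PosDef)
    (hB1 : B1.PosSemidef) (hB2 : B2.PosSemidef)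
    (h : (B2 - B1).PosSemidef) :
    (geomMean A B2 - geomMean A B1).PosSemidef := by
  have hApsd := hA.posSemidef
  have hRA : psdSqrt A = hApsd.sqrt := dif_pos hApsd
  set R : Matrix (Fin n) (Fin n) ℂ := psdSqrt A with hRdef
  have hRps : R.PosSemidef := by rw [hRA]; exact hApsd.posSemidef_sqrt
  have hCps : (R⁻¹).PosSemidef := hRps.inv
  have hCH : (R⁻¹)ᴴ = R⁻¹ := hCps.1
  set C : Matrix (Fin n) (Fin n) ℂ := R⁻¹ with hCdef
  have hM1 : (C * B1 * C).PosSemidef := by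
    have := hB1.conjTranspose_mul_mul_same C
    rwa [hCH] at this
  have hM2 : (C * B2 * C).PosSemidef := by
    have := hB2.conjTranspose_mul_mul_same C
    rwa [hCH] at this
  have hMdiff : (C * B2 * C - C * B1 * C).PosSemidef := by
    have := h.conjTranspose_mul_mul_same C
    rw [hCH] at this
    have e : C * (B2 - B1) * C = C * B2 * C - C * B1 * C := by
      rw [mul_sub, sub_mul]
    rwa [e] at this
  have hmono := sqrt_loewner_mono hM1 hM2 hMdiff
  have e1 : psdSqrt (C * B1 * C) = hM1.sqrt := dif_pos hM1
  have e2 : psdSqrt (C * B2 * C) = hM2.sqrt := dif_pos hM2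
  have egoal : geomMean A B2 - geomMean A B1 = Rᴴ * (hM2.sqrt - hM1.sqrt) * R := by
    rw [hRps.1]
    simp only [geomMean, ← hRdef, ← hCdef, e1, e2]
    rw [mul_sub, sub_mul]
  rw [egoal]
  exact hmono.conjTranspose_mul_mul_same R
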